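/- Let n > 1 and let K, L ⊆ ℝⁿ be strictly convex bodies that are origin-symmetric (K = −K and L = −L), with cross covariogram g = g_{K,L}. Then g^{1/n} is strictly concave on its support (i.e., for all x₀ ≠ x₁ in K + (−L) and t ∈ (0,1), g((1−t)x₀ + t x₁)^{1/n} > (1−t) g(x₀)^{1/n} + t g(x₁)^{1/n}) if and only if ∂K ∩ ∂L ≠ ∅. -/

import Mathlib

open MeasureTheory Set Pointwise

open Bornology
open scoped ENNReal NNReal
open MeasureTheory Set Pointwise Bornology
open scoped ENNReal NNReal

lemma combo_image2 {X : Type*} [AddCommMonoid X] [SMul ℝ X] (u v : ℝ) (A B : Set X) :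
    u • A + v • B = image2 (fun a b => u • a + v • b) A B := by
  rw [← Set.image2_add, ← Set.image_smul (a := u), ← Set.image_smul (a := v),
    Set.image2_image_left, Set.image2_image_right]

lemma image_combo {X Y : Type*} [AddCommMonoid X] [SMul ℝ X] [AddCommMonoid Y] [SMul ℝ Y]
    (φ : X → Y) (u v : ℝ) (h : ∀ x y, φ (u • x + v • y) = u • φ x + v • φ y) (A B : Set X) :
    φ '' (u • A + v • B) = u • (φ '' A) + v • (φ '' B) := by
  rw [combo_image2, Set.image_image2, combo_image2, Set.image2_image_left, Set.image2_image_right]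
  exact Set.image2_congr fun a _ b _ => h a b

lemma mem_combo {X : Type*} [AddCommMonoid X] [SMul ℝ X] {u v : ℝ} {A B : Set X} {z : X} :
    z ∈ u • A + v • B ↔ ∃ a ∈ A, ∃ b ∈ B, u • a + v • b = z := by
  rw [combo_image2]; exact Set.mem_image2

-- interval sandwich
lemma convex_subset_Icc {S : Set ℝ} (hSne : S.Nonempty) (hSb : IsBounded S) :
    S ⊆ Icc (sInf S) (sSup S) :=
  fun _ hx => ⟨csInf_le hSb.bddBelow hx, le_csSup hSb.bddAbove hx⟩

lemma Ioo_subset_convex {S : Set ℝ} (hS : Convex ℝ S) (hSne : S.Nonempty) :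
    Ioo (sInf S) (sSup S) ⊆ S := by
  intro x hx
  obtain ⟨a, ha, hax⟩ := exists_lt_of_csInf_lt hSne hx.1
  obtain ⟨b, hb, hxb⟩ := exists_lt_of_lt_csSup hSne hx.2
  exact hS.ordConnected.out ha hb ⟨hax.le, hxb.le⟩

lemma Ioo_add_Ioo' {a b c d : ℝ} (hab : a < b) (hcd : c < d) :
    Ioo a b + Ioo c d = Ioo (a + c) (b + d) := by
  apply Set.Subset.antisymm
  · rintro _ ⟨x, hx, y, hy, rfl⟩
    exact ⟨add_lt_add hx.1 hy.1, add_lt_add hx.2 hy.2⟩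
  · intro z hz
    set x : ℝ := (max a (z - d) + min b (z - c)) / 2 with hxdef
    have h1 : a < min b (z - c) := lt_min hab (by linarith [hz.1])
    have h2 : z - d < min b (z - c) := lt_min (by linarith [hz.2]) (by linarith [hcd])
    have hlt : max a (z - d) < min b (z - c) := max_lt h1 h2
    have hxa : a < x := by
      have : a ≤ max a (z - d) := le_max_left _ _
      simp only [hxdef]; linarith
    have hxd : z - d < x := by
      have : z - d ≤ max a (z - d) := le_max_right _ _
      simp only [hxdef]; linarith
    have hxb : x < b := by
      have : min b (z - c) ≤ b := min_le_left _ _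
      simp only [hxdef]; linarith
    have hxc : x < z - c := by
      have : min b (z - c) ≤ z - c := min_le_right _ _
      simp only [hxdef]; linarith
    exact ⟨x, ⟨hxa, hxb⟩, z - x, ⟨by linarith, by linarith⟩, by ring⟩

lemma volume_convex_interval {S : Set ℝ} (hS : Convex ℝ S) (hSne : S.Nonempty)
    (hSb : IsBounded S) : volume S = ENNReal.ofReal (sSup S - sInf S) := by
  apply le_antisymm
  · calc volume S ≤ volume (Icc (sInf S) (sSup S)) :=
          measure_mono (convex_subset_Icc hSne hSb)
      _ = ENNReal.ofReal (sSup S - sInf S) := Real.volume_Icc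
  · calc ENNReal.ofReal (sSup S - sInf S) = volume (Ioo (sInf S) (sSup S)) :=
          Real.volume_Ioo.symm
      _ ≤ volume S := measure_mono (Ioo_subset_convex hS hSne)

lemma degenerate_singleton {S : Set ℝ} (hSne : S.Nonempty) (hSb : IsBounded S)
    (h : sInf S = sSup S) : S = {sInf S} := by
  apply Set.Subset.antisymm
  · intro x hx
    have h2 := convex_subset_Icc hSne hSb hx
    have : x = sInf S := le_antisymm (h ▸ h2.2) h2.1
    simpa using this
  · rintro x rfl
    obtain ⟨y, hy⟩ := hSne
    have h2 := convex_subset_Icc ⟨y, hy⟩ hSb hy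
    have : y = sInf S := le_antisymm (h ▸ h2.2) h2.1
    rwa [← this]

/-- vol of a scaled set plus a point, in ℝ. -/
lemma volume_point_add_smul (c : ℝ) {u : ℝ} (hu : 0 < u) (T : Set ℝ) :
    volume ({c} + u • T) = ENNReal.ofReal u * volume T := by
  have h1 : ({c} + u • T : Set ℝ) = c +ᵥ (u • T) := by
    rw [Set.singleton_add]; rfl
  rw [h1, measure_vadd volume c (u • T)]
  calc volume (u • T) = ENNReal.ofReal |u ^ Module.finrank ℝ ℝ| * volume T :=
        Measure.addHaar_smul volume u T
    _ = ENNReal.ofReal u * volume T := by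
        rw [Module.finrank_self, pow_one, abs_of_pos hu]

lemma degenerate_exists {S : Set ℝ} (hSne : S.Nonempty) (hSb : IsBounded S)
    (h : sInf S = sSup S) : ∃ σ, S = {σ} := ⟨_, degenerate_singleton hSne hSb h⟩

/-- 1-D inequality: `vol((1-s)S + sT) ≥ (1-s) vol S + s vol T` for bounded convex sets. -/
lemma oneDim {S T : Set ℝ} (hS : Convex ℝ S) (hT : Convex ℝ T) (hSne : S.Nonempty)
    (hTne : T.Nonempty) (hSb : IsBounded S) (hTb : IsBounded T) {s : ℝ} (hs0 : 0 < s)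
    (hs1 : s < 1) :
    ENNReal.ofReal (1 - s) * volume S + ENNReal.ofReal s * volume T
      ≤ volume ((1 - s) • S + s • T) := by
  have h1s : (0:ℝ) < 1 - s := by linarith
  have hIS : sInf S ≤ sSup S := by
    obtain ⟨y, hy⟩ := hSne
    have h2 := convex_subset_Icc ⟨y, hy⟩ hSb hy; exact h2.1.trans h2.2
  have hIT : sInf T ≤ sSup T := by
    obtain ⟨y, hy⟩ := hTne
    have h2 := convex_subset_Icc ⟨y, hy⟩ hTb hy; exact h2.1.trans h2.2
  rcases eq_or_lt_of_le hIS with hSdeg | hSnd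
  · obtain ⟨σ, hSpt⟩ := degenerate_exists hSne hSb hSdeg
    rw [hSpt, Set.smul_set_singleton, measure_singleton, mul_zero, zero_add,
      smul_eq_mul, volume_point_add_smul _ hs0 T]
  · rcases eq_or_lt_of_le hIT with hTdeg | hTnd
    · obtain ⟨τ, hTpt⟩ := degenerate_exists hTne hTb hTdeg
      rw [hTpt, Set.smul_set_singleton, measure_singleton, mul_zero, add_zero,
        smul_eq_mul, add_comm ((1-s) • S), volume_point_add_smul _ h1s S]
    · -- both nondegenerate
      have hsub : Ioo ((1-s) * sInf S + s * sInf T) ((1-s) * sSup S + s * sSup T)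
          ⊆ (1 - s) • S + s • T := by
        rw [← Ioo_add_Ioo' (by nlinarith : (1-s) * sInf S < (1-s) * sSup S)
              (by nlinarith : s * sInf T < s * sSup T)]
        gcongr
        · rw [show ((1-s) * sInf S) = (1-s) • sInf S from rfl,
            show ((1-s) * sSup S) = (1-s) • sSup S from rfl,
            smul_eq_mul, smul_eq_mul, ← LinearOrderedField.smul_Ioo h1s]
          exact smul_set_mono (Ioo_subset_convex hS hSne)
        · rw [show (s * sInf T) = s • sInf T from rfl, show (s * sSup T) = s • sSup T from rfl,
            smul_eq_mul, smul_eq_mul, ← LinearOrderedField.smul_Ioo hs0]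
          exact smul_set_mono (Ioo_subset_convex hT hTne)
      calc ENNReal.ofReal (1 - s) * volume S + ENNReal.ofReal s * volume T
          = ENNReal.ofReal ((1-s) * (sSup S - sInf S)) + ENNReal.ofReal (s * (sSup T - sInf T)) := by
            rw [volume_convex_interval hS hSne hSb, volume_convex_interval hT hTne hTb,
              ENNReal.ofReal_mul h1s.le, ENNReal.ofReal_mul hs0.le]
        _ = ENNReal.ofReal (((1-s) * sSup S + s * sSup T) - ((1-s) * sInf S + s * sInf T)) := by
            rw [← ENNReal.ofReal_add (by nlinarith) (by nlinarith)]; ring_nf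
        _ = volume (Ioo ((1-s) * sInf S + s * sInf T) ((1-s) * sSup S + s * sSup T)) :=
            Real.volume_Ioo.symm
        _ ≤ volume ((1 - s) • S + s • T) := measure_mono hsub

noncomputable section

/-- Multiplicative Brunn–Minkowski statement for a space `X`. -/
def BMstat (X : Type*) [NormedAddCommGroup X] [NormedSpace ℝ X] [MeasureSpace X] : Prop :=
  ∀ s : ℝ, 0 < s → s < 1 → ∀ A B : Set X, A.Nonempty → B.Nonempty → IsCompact A → IsCompact B →
    Convex ℝ A → Convex ℝ B →
      volume A ^ (1 - s) * volume B ^ s ≤ volume ((1 - s) • A + s • B)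

section Slice

variable {V : Type*} [NormedAddCommGroup V] [NormedSpace ℝ V] [MeasureSpace V]
  [BorelSpace V] [SigmaFinite (volume : Measure V)]

lemma slice_convex {A : Set (ℝ × V)} (hA : Convex ℝ A) (r : ℝ) :
    Convex ℝ (Prod.mk r ⁻¹' A) := by
  intro x hx y hy u v hu hv huv
  have h := hA hx hy hu hv huv
  have : u • (r, x) + v • (r, y) = (r, u • x + v • y) := by
    rw [Prod.smul_mk, Prod.smul_mk, Prod.mk_add_mk]
    congr 1
    simp only [smul_eq_mul, ← add_mul, huv, one_mul]
  rwa [this] at h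

lemma slice_compact {A : Set (ℝ × V)} (hA : IsCompact A) (r : ℝ) :
    IsCompact (Prod.mk r ⁻¹' A) :=
  IsCompact.of_isClosed_subset (hA.image continuous_snd)
    (hA.isClosed.preimage (Continuous.prodMk_right r)) (fun x hx => ⟨(r, x), hx, rfl⟩)

lemma slice_combo_incl {A B : Set (ℝ × V)} {s : ℝ} (a b : ℝ) :
    (1 - s) • (Prod.mk a ⁻¹' A) + s • (Prod.mk b ⁻¹' B)
      ⊆ Prod.mk ((1 - s) * a + s * b) ⁻¹' ((1 - s) • A + s • B) := by
  intro z hz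
  rw [mem_combo] at hz
  obtain ⟨x, hx, y, hy, rfl⟩ := hz
  refine Set.mem_preimage.mpr (mem_combo.mpr ⟨(a, x), hx, (b, y), hy, ?_⟩)
  rw [Prod.smul_mk, Prod.smul_mk, Prod.mk_add_mk]
  rfl

lemma slice_vol_ineq (hV : BMstat V) {s : ℝ} (hs0 : 0 < s) (hs1 : s < 1)
    {A B : Set (ℝ × V)} (hAc : IsCompact A) (hBc : IsCompact B)
    (hAv : Convex ℝ A) (hBv : Convex ℝ B) (a b : ℝ) :
    volume (Prod.mk a ⁻¹' A) ^ (1 - s) * volume (Prod.mk b ⁻¹' B) ^ s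
      ≤ volume (Prod.mk ((1 - s) * a + s * b) ⁻¹' ((1 - s) • A + s • B)) := by
  by_cases hA : (Prod.mk a ⁻¹' A).Nonempty
  · by_cases hB : (Prod.mk b ⁻¹' B).Nonempty
    · calc volume (Prod.mk a ⁻¹' A) ^ (1 - s) * volume (Prod.mk b ⁻¹' B) ^ s
          ≤ volume ((1 - s) • (Prod.mk a ⁻¹' A) + s • (Prod.mk b ⁻¹' B)) :=
            hV s hs0 hs1 _ _ hA hB (slice_compact hAc a) (slice_compact hBc b)
              (slice_convex hAv a) (slice_convex hBv b)
        _ ≤ _ := measure_mono (slice_combo_incl a b)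
    · rw [Set.not_nonempty_iff_eq_empty.mp hB, measure_empty,
        ENNReal.zero_rpow_of_pos hs0, mul_zero]
      exact zero_le
  · rw [Set.not_nonempty_iff_eq_empty.mp hA, measure_empty,
      ENNReal.zero_rpow_of_pos (by linarith : (0:ℝ) < 1 - s), zero_mul]
    exact zero_le

lemma superlevel_convex (hV : BMstat V) {D : Set (ℝ × V)} (hDc : IsCompact D)
    (hDv : Convex ℝ D) {t : ℝ} (ht : 0 < t) :
    Convex ℝ {r : ℝ | ENNReal.ofReal t ≤ volume (Prod.mk r ⁻¹' D)} := by
  intro a ha b hb u v hu hv huv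
  simp only [mem_setOf_eq] at ha hb ⊢
  rcases eq_or_lt_of_le hu with rfl | hu'
  · simpa [(by linarith : v = 1)] using hb
  rcases eq_or_lt_of_le hv with rfl | hv'
  · simpa [(by linarith : u = 1)] using ha
  have hcombo : (1 - v) • D + v • D = D := by
    rw [← Convex.add_smul hDv (by linarith : (0:ℝ) ≤ 1 - v) hv]
    rw [show (1 - v) + v = 1 by ring, one_smul]
  have key := slice_vol_ineq hV hv' (by linarith : v < 1) hDc hDc hDv hDv a b
  rw [hcombo] at key
  have ht0 : (ENNReal.ofReal t) ≠ 0 := (ENNReal.ofReal_pos.mpr ht).ne'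
  calc ENNReal.ofReal t = ENNReal.ofReal t ^ ((1 - v) + v) := by
        rw [show (1 - v) + v = 1 by ring, ENNReal.rpow_one]
    _ = ENNReal.ofReal t ^ (1 - v) * ENNReal.ofReal t ^ v :=
        ENNReal.rpow_add _ _ ht0 ENNReal.ofReal_ne_top
    _ ≤ volume (Prod.mk a ⁻¹' D) ^ (1 - v) * volume (Prod.mk b ⁻¹' D) ^ v :=
        mul_le_mul' (ENNReal.rpow_le_rpow ha (by linarith)) (ENNReal.rpow_le_rpow hb hv)
    _ ≤ volume (Prod.mk ((1 - v) * a + v * b) ⁻¹' D) := key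
    _ = volume (Prod.mk (u • a + v • b) ⁻¹' D) := by
        rw [show (1 - v) * a + v * b = u • a + v • b by
          simp only [smul_eq_mul]; rw [show u = 1 - v by linarith]]

end Slice

set_option linter.unusedSectionVars false

/-- Layer-cake for finite-valued measurable `φ`. -/
lemma layercake (φ : ℝ → ℝ≥0∞) (hφ : Measurable φ) (hfin : ∀ r, φ r ≠ ⊤) :
    ∫⁻ r, φ r = ∫⁻ t in Ioi (0:ℝ), volume {r | ENNReal.ofReal t ≤ φ r} := by
  calc ∫⁻ r, φ r = ∫⁻ r, ENNReal.ofReal ((φ r).toReal) := by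
        congr 1; funext r; rw [ENNReal.ofReal_toReal (hfin r)]
    _ = ∫⁻ t in Ioi (0:ℝ), volume {r | t ≤ (φ r).toReal} :=
        lintegral_eq_lintegral_meas_le volume
          (Filter.Eventually.of_forall fun r => ENNReal.toReal_nonneg)
          hφ.ennreal_toReal.aemeasurable
    _ = ∫⁻ t in Ioi (0:ℝ), volume {r | ENNReal.ofReal t ≤ φ r} := by
        apply setLIntegral_congr_fun measurableSet_Ioi
          (fun t ht => ?_)
        congr 1; ext r
        simp only [mem_setOf_eq]
        rw [← ENNReal.ofReal_toReal (hfin r),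
          ENNReal.ofReal_le_ofReal_iff ENNReal.toReal_nonneg,
          ENNReal.ofReal_toReal (hfin r)]

/-- Cut off the integral at level `κ` when the integrand vanishes beyond. -/
lemma tail_cutoff (ψ : ℝ → ℝ≥0∞) {κ : ℝ} (hκ : 0 < κ)
    (hvan : ∀ t, κ < t → ψ t = 0) :
    ∫⁻ t in Ioi (0:ℝ), ψ t = ∫⁻ t in Ioo (0:ℝ) κ, ψ t := by
  have hsplit : Ioi (0:ℝ) = Ioo (0:ℝ) κ ∪ Ici κ := by
    ext t; simp only [mem_Ioi, mem_union, mem_Ioo, mem_Ici]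
    constructor
    · intro ht; rcases lt_or_ge t κ with h | h
      · exact Or.inl ⟨ht, h⟩
      · exact Or.inr h
    · rintro (⟨h1, _⟩ | h); exact h1; linarith
  rw [hsplit, lintegral_union measurableSet_Ici
    (by rw [Set.disjoint_left]; intro t ht ht'; exact absurd ht' (not_le.mpr ht.2))]
  have h2 : ∫⁻ t in Ici κ, ψ t = ∫⁻ t in Ioi κ, ψ t :=
    (setLIntegral_congr (MeasureTheory.Ioi_ae_eq_Ici (a := κ))).symm
  have h3 : ∫⁻ t in Ioi κ, ψ t = 0 := by
    rw [setLIntegral_congr_fun measurableSet_Ioi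
      (fun t (ht : κ < t) => hvan t ht)]
    simp
  rw [h2, h3, add_zero]

/-- Change of variables `t = κ θ` on `(0, κ)`. -/
lemma scale_lintegral (ψ : ℝ → ℝ≥0∞) (hψ : Measurable ψ) {κ : ℝ} (hκ : 0 < κ) :
    ∫⁻ t in Ioo (0:ℝ) κ, ψ t = ENNReal.ofReal κ * ∫⁻ θ in Ioo (0:ℝ) 1, ψ (κ * θ) := by
  have hmap : Measure.map (fun θ : ℝ => κ * θ) volume = ENNReal.ofReal |κ⁻¹| • volume :=
    Real.map_volume_mul_left (ne_of_gt hκ)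
  have hind : Measurable ((Ioo (0:ℝ) κ).indicator ψ) := hψ.indicator measurableSet_Ioo
  have key : ∫⁻ θ, (Ioo (0:ℝ) κ).indicator ψ (κ * θ)
      = ENNReal.ofReal |κ⁻¹| * ∫⁻ t, (Ioo (0:ℝ) κ).indicator ψ t := by
    rw [← lintegral_map hind (measurable_const_mul κ), hmap, lintegral_smul_measure, smul_eq_mul]
  have heq : ∀ θ : ℝ, (Ioo (0:ℝ) κ).indicator ψ (κ * θ)
      = (Ioo (0:ℝ) 1).indicator (fun θ => ψ (κ * θ)) θ := by
    intro θ
    by_cases h : θ ∈ Ioo (0:ℝ) 1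
    · rw [Set.indicator_of_mem h, Set.indicator_of_mem]
      exact ⟨mul_pos hκ h.1, by nlinarith [h.2]⟩
    · rw [Set.indicator_of_notMem h, Set.indicator_of_notMem]
      intro hc
      have h1 : 0 < θ := by nlinarith [hc.1, hc.2]
      exact h ⟨h1, by nlinarith [hc.2]⟩
  rw [← lintegral_indicator measurableSet_Ioo, ← lintegral_indicator measurableSet_Ioo]
  have := key
  simp_rw [heq] at this
  rw [this, ← mul_assoc, ← ENNReal.ofReal_mul hκ.le,
    abs_of_pos (inv_pos.mpr hκ), mul_inv_cancel₀ (ne_of_gt hκ), ENNReal.ofReal_one, one_mul]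

/-- two-point weighted AM–GM in `ℝ≥0∞`. -/
lemma ennreal_geom_mean {s : ℝ} (hs0 : 0 < s) (hs1 : s < 1) {x y : ℝ≥0∞}
    (hx : x ≠ ⊤) (hy : y ≠ ⊤) :
    x ^ (1 - s) * y ^ s ≤ ENNReal.ofReal (1 - s) * x + ENNReal.ofReal s * y := by
  lift x to ℝ≥0 using hx
  lift y to ℝ≥0 using hy
  have h1s : (0:ℝ) ≤ 1 - s := by linarith
  have hw : (1 - s).toNNReal + s.toNNReal = 1 := by
    ext
    push_cast [Real.coe_toNNReal _ h1s, Real.coe_toNNReal _ hs0.le]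
    ring
  have key := NNReal.geom_mean_le_arith_mean2_weighted ((1-s).toNNReal) (s.toNNReal) x y hw
  rw [Real.coe_toNNReal _ h1s, Real.coe_toNNReal _ hs0.le] at key
  calc (x : ℝ≥0∞) ^ (1 - s) * (y : ℝ≥0∞) ^ s
      = ((x ^ (1-s) * y ^ s : NNReal) : ℝ≥0∞) := by
        rw [ENNReal.coe_mul, ENNReal.coe_rpow_of_nonneg x h1s, ENNReal.coe_rpow_of_nonneg y hs0.le]
    _ ≤ (((1-s).toNNReal * x + s.toNNReal * y : NNReal) : ℝ≥0∞) := ENNReal.coe_le_coe.mpr key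
    _ = ENNReal.ofReal (1 - s) * x + ENNReal.ofReal s * y := by
        rw [ENNReal.coe_add, ENNReal.coe_mul, ENNReal.coe_mul]; rfl

lemma bm_step (m : ℕ) (hV : BMstat (Fin m → ℝ)) : BMstat (ℝ × (Fin m → ℝ)) := by
  intro s hs0 hs1 A B hAne hBne hAc hBc hAv hBv
  have h1s : (0:ℝ) < 1 - s := by linarith
  set C := (1 - s) • A + s • B with hCdef
  have hCc : IsCompact C := (hAc.smul (1 - s)).add (hBc.smul s)
  have hCv : Convex ℝ C := (hAv.smul _).add (hBv.smul _)
  by_cases hA0 : volume A = 0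
  · rw [hA0, ENNReal.zero_rpow_of_pos h1s, zero_mul]; exact zero_le
  by_cases hB0 : volume B = 0
  · rw [hB0, ENNReal.zero_rpow_of_pos hs0, mul_zero]; exact zero_le
  -- slice volume functions
  set f : ℝ → ℝ≥0∞ := fun r => volume (Prod.mk r ⁻¹' A) with hfdef
  set g : ℝ → ℝ≥0∞ := fun r => volume (Prod.mk r ⁻¹' B) with hgdef
  set h : ℝ → ℝ≥0∞ := fun r => volume (Prod.mk r ⁻¹' C) with hhdef
  have hfm : Measurable f := measurable_measure_prodMk_left hAc.measurableSet
  have hgm : Measurable g := measurable_measure_prodMk_left hBc.measurableSet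
  have hhm : Measurable h := measurable_measure_prodMk_left hCc.measurableSet
  have hffin : ∀ r, f r ≠ ⊤ := fun r =>
    (lt_of_le_of_lt (measure_mono (show _ ⊆ Prod.snd '' _ from fun x hx => ⟨(r, x), hx, rfl⟩))
      (hAc.image continuous_snd).measure_lt_top).ne
  have hgfin : ∀ r, g r ≠ ⊤ := fun r =>
    (lt_of_le_of_lt (measure_mono (show _ ⊆ Prod.snd '' _ from fun x hx => ⟨(r, x), hx, rfl⟩))
      (hBc.image continuous_snd).measure_lt_top).ne
  have hhfin : ∀ r, h r ≠ ⊤ := fun r =>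
    (lt_of_le_of_lt (measure_mono (show _ ⊆ Prod.snd '' _ from fun x hx => ⟨(r, x), hx, rfl⟩))
      (hCc.image continuous_snd).measure_lt_top).ne
  -- Fubini
  have fubini : ∀ D : Set (ℝ × (Fin m → ℝ)), MeasurableSet D →
      volume D = ∫⁻ r, volume (Prod.mk r ⁻¹' D) := by
    intro D hD
    rw [Measure.volume_eq_prod, Measure.prod_apply hD]
  -- sups
  set FA : ℝ≥0∞ := ⨆ r, f r with hFAdef
  set GB : ℝ≥0∞ := ⨆ r, g r with hGBdef
  have hFAtop : FA ≠ ⊤ := by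
    refine (lt_of_le_of_lt (iSup_le fun r => measure_mono (show _ ⊆ Prod.snd '' _ from fun x hx => ⟨(r, x), hx, rfl⟩))
      (hAc.image continuous_snd).measure_lt_top).ne
  have hGBtop : GB ≠ ⊤ := by
    refine (lt_of_le_of_lt (iSup_le fun r => measure_mono (show _ ⊆ Prod.snd '' _ from fun x hx => ⟨(r, x), hx, rfl⟩))
      (hBc.image continuous_snd).measure_lt_top).ne
  have hFA0 : FA ≠ 0 := by
    intro hzero
    apply hA0
    have hf0 : ∀ r, f r = 0 := fun r => le_antisymm (hzero ▸ le_iSup f r) (zero_le)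
    rw [fubini A hAc.measurableSet]
    calc ∫⁻ r, volume (Prod.mk r ⁻¹' A) = ∫⁻ (_ : ℝ), (0:ℝ≥0∞) := by
          congr 1; funext r; exact hf0 r
      _ = 0 := lintegral_zero
  have hGB0 : GB ≠ 0 := by
    intro hzero
    apply hB0
    have hg0 : ∀ r, g r = 0 := fun r => le_antisymm (hzero ▸ le_iSup g r) (zero_le)
    rw [fubini B hBc.measurableSet]
    calc ∫⁻ r, volume (Prod.mk r ⁻¹' B) = ∫⁻ (_ : ℝ), (0:ℝ≥0∞) := by
          congr 1; funext r; exact hg0 r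
      _ = 0 := lintegral_zero
  set Fr : ℝ := FA.toReal with hFrdef
  set Gr : ℝ := GB.toReal with hGrdef
  have hFrpos : 0 < Fr := ENNReal.toReal_pos hFA0 hFAtop
  have hGrpos : 0 < Gr := ENNReal.toReal_pos hGB0 hGBtop
  -- level measure functions
  set μf : ℝ → ℝ≥0∞ := fun t => volume {r : ℝ | ENNReal.ofReal t ≤ f r} with hμfdef
  set μg : ℝ → ℝ≥0∞ := fun t => volume {r : ℝ | ENNReal.ofReal t ≤ g r} with hμgdef
  set μh : ℝ → ℝ≥0∞ := fun t => volume {r : ℝ | ENNReal.ofReal t ≤ h r} with hμhdef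
  have hμfa : Antitone μf := fun t₁ t₂ h12 =>
    measure_mono (fun r hr => le_trans (ENNReal.ofReal_le_ofReal h12) hr)
  have hμga : Antitone μg := fun t₁ t₂ h12 =>
    measure_mono (fun r hr => le_trans (ENNReal.ofReal_le_ofReal h12) hr)
  have hμha : Antitone μh := fun t₁ t₂ h12 =>
    measure_mono (fun r hr => le_trans (ENNReal.ofReal_le_ofReal h12) hr)
  set c : ℝ := Fr ^ (1 - s) * Gr ^ s with hcdef
  have hcpos : 0 < c := mul_pos (Real.rpow_pos_of_pos hFrpos _) (Real.rpow_pos_of_pos hGrpos _)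
  set If : ℝ≥0∞ := ∫⁻ θ in Ioo (0:ℝ) 1, μf (Fr * θ) with hIfdef
  set Ig : ℝ≥0∞ := ∫⁻ θ in Ioo (0:ℝ) 1, μg (Gr * θ) with hIgdef
  set Ih : ℝ≥0∞ := ∫⁻ θ in Ioo (0:ℝ) 1, μh (c * θ) with hIhdef
  -- volume identities
  have hvolA : volume A = ENNReal.ofReal Fr * If := by
    rw [fubini A hAc.measurableSet]
    calc ∫⁻ r, f r = ∫⁻ t in Ioi (0:ℝ), μf t := layercake f hfm hffin
      _ = ∫⁻ t in Ioo (0:ℝ) Fr, μf t := by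
          refine tail_cutoff μf hFrpos (fun t ht => ?_)
          have hempty : {r : ℝ | ENNReal.ofReal t ≤ f r} = ∅ := by
            rw [Set.eq_empty_iff_forall_notMem]
            intro r hr
            have h1 : f r ≤ FA := le_iSup f r
            have h2 : FA < ENNReal.ofReal t := by
              rw [← ENNReal.ofReal_toReal hFAtop]
              exact (ENNReal.ofReal_lt_ofReal_iff (lt_trans hFrpos ht)).mpr ht
            exact absurd (le_trans hr h1) (not_le.mpr h2)
          simp only [hμfdef, hempty, measure_empty]
      _ = ENNReal.ofReal Fr * If := scale_lintegral μf hμfa.measurable hFrpos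
  have hvolB : volume B = ENNReal.ofReal Gr * Ig := by
    rw [fubini B hBc.measurableSet]
    calc ∫⁻ r, g r = ∫⁻ t in Ioi (0:ℝ), μg t := layercake g hgm hgfin
      _ = ∫⁻ t in Ioo (0:ℝ) Gr, μg t := by
          refine tail_cutoff μg hGrpos (fun t ht => ?_)
          have hempty : {r : ℝ | ENNReal.ofReal t ≤ g r} = ∅ := by
            rw [Set.eq_empty_iff_forall_notMem]
            intro r hr
            have h1 : g r ≤ GB := le_iSup g r
            have h2 : GB < ENNReal.ofReal t := by
              rw [← ENNReal.ofReal_toReal hGBtop]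
              exact (ENNReal.ofReal_lt_ofReal_iff (lt_trans hGrpos ht)).mpr ht
            exact absurd (le_trans hr h1) (not_le.mpr h2)
          simp only [hμgdef, hempty, measure_empty]
      _ = ENNReal.ofReal Gr * Ig := scale_lintegral μg hμga.measurable hGrpos
  have hvolC : ENNReal.ofReal c * Ih ≤ volume C := by
    rw [fubini C hCc.measurableSet]
    calc ENNReal.ofReal c * Ih = ∫⁻ t in Ioo (0:ℝ) c, μh t :=
          (scale_lintegral μh hμha.measurable hcpos).symm
      _ ≤ ∫⁻ t in Ioi (0:ℝ), μh t :=
          lintegral_mono_set (fun t ht => ht.1)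
      _ = ∫⁻ r, h r := (layercake h hhm hhfin).symm
  -- key level inequality
  have hlevel : ∀ θ ∈ Ioo (0:ℝ) 1,
      ENNReal.ofReal (1 - s) * μf (Fr * θ) + ENNReal.ofReal s * μg (Gr * θ) ≤ μh (c * θ) := by
    intro θ hθ
    set S := {r : ℝ | ENNReal.ofReal (Fr * θ) ≤ f r} with hSdef
    set T := {r : ℝ | ENNReal.ofReal (Gr * θ) ≤ g r} with hTdef
    have hFθ : 0 < Fr * θ := mul_pos hFrpos hθ.1
    have hGθ : 0 < Gr * θ := mul_pos hGrpos hθ.1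
    have hSconv : Convex ℝ S := superlevel_convex hV hAc hAv hFθ
    have hTconv : Convex ℝ T := superlevel_convex hV hBc hBv hGθ
    have hSsub : S ⊆ Prod.fst '' A := by
      intro r hr
      by_contra hns
      have hempty : Prod.mk r ⁻¹' A = ∅ := by
        rw [Set.eq_empty_iff_forall_notMem]
        intro x hx
        exact hns ⟨(r, x), hx, rfl⟩
      have : f r = 0 := by rw [hfdef]; simp only [hempty, measure_empty]
      rw [hSdef, mem_setOf_eq, this] at hr
      exact (ENNReal.ofReal_pos.mpr hFθ).ne' (le_antisymm hr (zero_le))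
    have hTsub : T ⊆ Prod.fst '' B := by
      intro r hr
      by_contra hns
      have hempty : Prod.mk r ⁻¹' B = ∅ := by
        rw [Set.eq_empty_iff_forall_notMem]
        intro x hx
        exact hns ⟨(r, x), hx, rfl⟩
      have : g r = 0 := by rw [hgdef]; simp only [hempty, measure_empty]
      rw [hTdef, mem_setOf_eq, this] at hr
      exact (ENNReal.ofReal_pos.mpr hGθ).ne' (le_antisymm hr (zero_le))
    have hSb : IsBounded S := ((hAc.image continuous_fst).isBounded).subset hSsub
    have hTb : IsBounded T := ((hBc.image continuous_fst).isBounded).subset hTsub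
    have hSne : S.Nonempty := by
      have : ENNReal.ofReal (Fr * θ) < FA := by
        rw [← ENNReal.ofReal_toReal hFAtop]
        exact (ENNReal.ofReal_lt_ofReal_iff hFrpos).mpr (by nlinarith [hθ.2])
      obtain ⟨r, hr⟩ := lt_iSup_iff.mp this
      exact ⟨r, hr.le⟩
    have hTne : T.Nonempty := by
      have : ENNReal.ofReal (Gr * θ) < GB := by
        rw [← ENNReal.ofReal_toReal hGBtop]
        exact (ENNReal.ofReal_lt_ofReal_iff hGrpos).mpr (by nlinarith [hθ.2])
      obtain ⟨r, hr⟩ := lt_iSup_iff.mp this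
      exact ⟨r, hr.le⟩
    have hinc : (1 - s) • S + s • T ⊆ {r : ℝ | ENNReal.ofReal (c * θ) ≤ h r} := by
      intro z hz
      rw [mem_combo] at hz
      obtain ⟨a, ha, b, hb, rfl⟩ := hz
      rw [mem_setOf_eq]
      have hreal : c * θ = (Fr * θ) ^ (1 - s) * ((Gr * θ) ^ s) := by
        rw [Real.mul_rpow hFrpos.le hθ.1.le, Real.mul_rpow hGrpos.le hθ.1.le, hcdef]
        rw [show Fr ^ (1-s) * θ ^ (1-s) * (Gr ^ s * θ ^ s)
            = (Fr ^ (1-s) * Gr ^ s) * (θ ^ (1-s) * θ ^ s) by ring]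
        rw [← Real.rpow_add hθ.1, show (1 - s) + s = 1 by ring, Real.rpow_one]
      calc ENNReal.ofReal (c * θ)
          = ENNReal.ofReal (Fr * θ) ^ (1-s) * ENNReal.ofReal (Gr * θ) ^ s := by
            rw [hreal, ENNReal.ofReal_mul (Real.rpow_nonneg hFθ.le _),
              ENNReal.ofReal_rpow_of_pos hFθ, ENNReal.ofReal_rpow_of_pos hGθ]
        _ ≤ f a ^ (1-s) * g b ^ s :=
            mul_le_mul' (ENNReal.rpow_le_rpow ha h1s.le) (ENNReal.rpow_le_rpow hb hs0.le)
        _ ≤ volume (Prod.mk ((1-s) * a + s * b) ⁻¹' C) :=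
            slice_vol_ineq hV hs0 hs1 hAc hBc hAv hBv a b
        _ = h ((1-s) • a + s • b) := by rw [hhdef]; norm_num
    calc ENNReal.ofReal (1 - s) * μf (Fr * θ) + ENNReal.ofReal s * μg (Gr * θ)
        ≤ volume ((1 - s) • S + s • T) := oneDim hSconv hTconv hSne hTne hSb hTb hs0 hs1
      _ ≤ μh (c * θ) := measure_mono hinc
  -- integrate the level inequality
  have hIhge : ENNReal.ofReal (1 - s) * If + ENNReal.ofReal s * Ig ≤ Ih := by
    calc ENNReal.ofReal (1 - s) * If + ENNReal.ofReal s * Ig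
        = ∫⁻ θ in Ioo (0:ℝ) 1,
            (ENNReal.ofReal (1 - s) * μf (Fr * θ) + ENNReal.ofReal s * μg (Gr * θ)) := by
          have hmf' : Measurable fun θ : ℝ => μf (Fr * θ) :=
            hμfa.measurable.comp (measurable_id.const_mul Fr)
          have hmg' : Measurable fun θ : ℝ => μg (Gr * θ) :=
            hμga.measurable.comp (measurable_id.const_mul Gr)
          rw [hIfdef, hIgdef, ← lintegral_const_mul _ hmf', ← lintegral_const_mul _ hmg',
            ← lintegral_add_left (hmf'.const_mul _)]
      _ ≤ ∫⁻ θ in Ioo (0:ℝ) 1, μh (c * θ) :=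
          setLIntegral_mono (hμha.measurable.comp (measurable_id.const_mul c)) hlevel
      _ = Ih := rfl
  -- finiteness
  have hIftop : If ≠ ⊤ := by
    intro htop
    rw [htop, ENNReal.mul_top (by simp [ENNReal.ofReal_pos.mpr hFrpos, (ENNReal.ofReal_pos.mpr hFrpos).ne'])] at hvolA
    exact hAc.measure_lt_top.ne hvolA
  have hIgtop : Ig ≠ ⊤ := by
    intro htop
    rw [htop, ENNReal.mul_top (by simp [(ENNReal.ofReal_pos.mpr hGrpos).ne'])] at hvolB
    exact hBc.measure_lt_top.ne hvolB
  -- conclude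
  calc volume A ^ (1 - s) * volume B ^ s
      = (ENNReal.ofReal Fr * If) ^ (1 - s) * (ENNReal.ofReal Gr * Ig) ^ s := by
        rw [hvolA, hvolB]
    _ = ENNReal.ofReal Fr ^ (1-s) * If ^ (1-s) * (ENNReal.ofReal Gr ^ s * Ig ^ s) := by
        rw [ENNReal.mul_rpow_of_ne_top ENNReal.ofReal_ne_top hIftop,
          ENNReal.mul_rpow_of_ne_top ENNReal.ofReal_ne_top hIgtop]
    _ = ENNReal.ofReal c * (If ^ (1-s) * Ig ^ s) := by
        rw [hcdef, ENNReal.ofReal_mul (Real.rpow_nonneg hFrpos.le _),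
          ENNReal.ofReal_rpow_of_pos hFrpos, ENNReal.ofReal_rpow_of_pos hGrpos]
        ring
    _ ≤ ENNReal.ofReal c * (ENNReal.ofReal (1 - s) * If + ENNReal.ofReal s * Ig) :=
        mul_le_mul_right (ennreal_geom_mean hs0 hs1 hIftop hIgtop) _
    _ ≤ ENNReal.ofReal c * Ih := mul_le_mul_right hIhge _
    _ ≤ volume C := hvolC

lemma convex_image_of_combo {X Y : Type*} [AddCommGroup X] [Module ℝ X] [AddCommGroup Y]
    [Module ℝ Y] (φ : X → Y) (h : ∀ (u v : ℝ) (x y : X), φ (u • x + v • y) = u • φ x + v • φ y)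
    {A : Set X} (hA : Convex ℝ A) : Convex ℝ (φ '' A) := by
  rintro _ ⟨a, ha, rfl⟩ _ ⟨b, hb, rfl⟩ u v hu hv huv
  exact ⟨u • a + v • b, hA ha hb hu hv huv, h u v a b⟩

lemma BMstat.transfer {X Y : Type*} [NormedAddCommGroup X] [NormedSpace ℝ X] [MeasureSpace X]
    [NormedAddCommGroup Y] [NormedSpace ℝ Y] [MeasureSpace Y]
    [FiniteDimensional ℝ X] [FiniteDimensional ℝ Y] [BorelSpace X] [BorelSpace Y]
    (e : X ≃ᵐ Y) (hmp : MeasurePreserving ⇑e volume volume)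
    (hlin : ∀ (u v : ℝ) (x y : X), e (u • x + v • y) = u • e x + v • e y)
    (hX : BMstat X) : BMstat Y := by
  have hlinsymm : ∀ (u v : ℝ) (x y : Y),
      e.symm (u • x + v • y) = u • e.symm x + v • e.symm y := by
    intro u v x y
    apply e.injective
    rw [hlin u v, e.apply_symm_apply, e.apply_symm_apply, e.apply_symm_apply]
  have haddsymm : ∀ x y : Y, e.symm (x + y) = e.symm x + e.symm y := by
    intro x y; simpa using hlinsymm 1 1 x y
  have hsmulsymm : ∀ (c : ℝ) (x : Y), e.symm (c • x) = c • e.symm x := by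
    intro c x
    have := hlinsymm c 0 x x
    simpa [zero_smul] using this
  let eL : Y →ₗ[ℝ] X := IsLinearMap.mk' ⇑e.symm ⟨haddsymm, hsmulsymm⟩
  have hconts : Continuous ⇑e.symm := eL.continuous_of_finiteDimensional
  intro s hs0 hs1 A B hAne hBne hAc hBc hAv hBv
  have himg : ∀ S : Set Y, ⇑e.symm '' S = ⇑e ⁻¹' S := by
    intro S
    ext x
    constructor
    · rintro ⟨y, hy, rfl⟩; simpa using hy
    · intro hx; exact ⟨e x, hx, e.symm_apply_apply x⟩
  have hA'c : IsCompact (⇑e ⁻¹' A) := by rw [← himg]; exact hAc.image hconts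
  have hB'c : IsCompact (⇑e ⁻¹' B) := by rw [← himg]; exact hBc.image hconts
  have hA'v : Convex ℝ (⇑e ⁻¹' A) := by
    rw [← himg]; exact convex_image_of_combo _ hlinsymm hAv
  have hB'v : Convex ℝ (⇑e ⁻¹' B) := by
    rw [← himg]; exact convex_image_of_combo _ hlinsymm hBv
  have hA'ne : (⇑e ⁻¹' A).Nonempty := by
    obtain ⟨a, ha⟩ := hAne; exact ⟨e.symm a, by simpa using ha⟩
  have hB'ne : (⇑e ⁻¹' B).Nonempty := by
    obtain ⟨b, hb⟩ := hBne; exact ⟨e.symm b, by simpa using hb⟩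
  have hvolA : volume (⇑e ⁻¹' A) = volume A :=
    hmp.measure_preimage hAc.measurableSet.nullMeasurableSet
  have hvolB : volume (⇑e ⁻¹' B) = volume B :=
    hmp.measure_preimage hBc.measurableSet.nullMeasurableSet
  have hcombo : (1 - s) • (⇑e ⁻¹' A) + s • (⇑e ⁻¹' B) = ⇑e ⁻¹' ((1 - s) • A + s • B) := by
    rw [← himg, ← himg, ← himg, image_combo ⇑e.symm (1 - s) s (fun x y => hlinsymm _ _ x y)]
  have hCc : IsCompact ((1 - s) • A + s • B) := (hAc.smul (1 - s)).add (hBc.smul s)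
  calc volume A ^ (1 - s) * volume B ^ s
      = volume (⇑e ⁻¹' A) ^ (1 - s) * volume (⇑e ⁻¹' B) ^ s := by rw [hvolA, hvolB]
    _ ≤ volume ((1 - s) • (⇑e ⁻¹' A) + s • (⇑e ⁻¹' B)) :=
        hX s hs0 hs1 _ _ hA'ne hB'ne hA'c hB'c hA'v hB'v
    _ = volume (⇑e ⁻¹' ((1 - s) • A + s • B)) := by rw [hcombo]
    _ = volume ((1 - s) • A + s • B) :=
        hmp.measure_preimage hCc.measurableSet.nullMeasurableSet

lemma bm_zero : BMstat (Fin 0 → ℝ) := by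
  intro s hs0 hs1 A B hAne hBne _ _ _ _
  have huniv : ∀ S : Set (Fin 0 → ℝ), S.Nonempty → S = univ := by
    rintro S ⟨x, hx⟩
    ext y
    simp only [mem_univ, iff_true]
    rwa [Subsingleton.elim y x]
  have hvol : volume (univ : Set (Fin 0 → ℝ)) = 1 := by
    rw [volume_pi, Measure.pi_univ]
    simp
  rw [huniv _ ((hAne.smul_set).add (hBne.smul_set)), huniv A hAne, huniv B hBne, hvol]
  simp

lemma bm_pi : ∀ m : ℕ, BMstat (Fin m → ℝ) := by
  intro m
  induction m with
  | zero => exact bm_zero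
  | succ m ih =>
      refine BMstat.transfer (MeasurableEquiv.piFinSuccAbove (fun _ : Fin (m+1) => ℝ) 0).symm
        (MeasurePreserving.symm _ (volume_preserving_piFinSuccAbove (fun _ : Fin (m+1) => ℝ) 0))
        ?_ (bm_step m ih)
      intro u v x y
      set pf := MeasurableEquiv.piFinSuccAbove (fun _ : Fin (m+1) => ℝ) 0 with hpf
      apply pf.injective
      rw [pf.apply_symm_apply]
      rw [show ∀ (a b : Fin (m+1) → ℝ), pf (u • a + v • b) = u • pf a + v • pf b
        from fun a b => rfl]
      rw [pf.apply_symm_apply, pf.apply_symm_apply]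

lemma bm_euclidean (n : ℕ) : BMstat (EuclideanSpace ℝ (Fin n)) :=
  BMstat.transfer (MeasurableEquiv.toLp 2 (Fin n → ℝ))
    (MeasurePreserving.symm _ (EuclideanSpace.volume_preserving_symm_measurableEquiv_toLp (Fin n)))
    (fun _ _ _ _ => rfl) (bm_pi n)

section Additive

variable {n : ℕ}

local notation "E" => EuclideanSpace ℝ (Fin n)

lemma vol_smul_set (u : ℝ) (X : Set E) :
    volume (u • X) = ENNReal.ofReal |u ^ n| * volume X := by
  rw [Measure.addHaar_smul volume u X, finrank_euclideanSpace_fin]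

lemma vol_combo_point (p : E) (X : Set E) {u : ℝ} (hu : 0 ≤ u) :
    volume ({p} + u • X) = ENNReal.ofReal (u ^ n) * volume X := by
  have h1 : ({p} + u • X) = p +ᵥ (u • X) := by rw [Set.singleton_add]; rfl
  rw [h1, measure_vadd volume p (u • X), vol_smul_set, abs_of_nonneg (pow_nonneg hu n)]

lemma smul_set_distrib (c : ℝ) (X Y : Set E) : c • (X + Y) = c • X + c • Y := by
  have := image_add (DistribMulAction.toAddMonoidHom E c) (s := X) (t := Y)
  simpa only [Set.image_smul, DistribMulAction.toAddMonoidHom_apply] using this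

/-- Additive Brunn–Minkowski in the form needed: `((1-t)a^{1/n} + t b^{1/n})^n ≤ vol(M)`. -/
lemma bm_additive (hn : n ≠ 0) {A B : Set E} (hAne : A.Nonempty) (hBne : B.Nonempty)
    (hAc : IsCompact A) (hBc : IsCompact B) (hAv : Convex ℝ A) (hBv : Convex ℝ B)
    {t : ℝ} (ht0 : 0 < t) (ht1 : t < 1) :
    ((1 - t) * (volume A).toReal ^ (n:ℝ)⁻¹ + t * (volume B).toReal ^ (n:ℝ)⁻¹) ^ n
      ≤ (volume ((1 - t) • A + t • B)).toReal := by
  have h1t : (0:ℝ) < 1 - t := by linarith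
  set a : ℝ := (volume A).toReal with hadef
  set b : ℝ := (volume B).toReal with hbdef
  have ha0 : 0 ≤ a := ENNReal.toReal_nonneg
  have hb0 : 0 ≤ b := ENNReal.toReal_nonneg
  have hMc : IsCompact ((1 - t) • A + t • B) := (hAc.smul (1 - t)).add (hBc.smul t)
  have hMtop : volume ((1 - t) • A + t • B) ≠ ⊤ := hMc.measure_lt_top.ne
  have hinvn : ((n:ℝ))⁻¹ ≠ 0 := by
    simp only [ne_eq, inv_eq_zero, Nat.cast_eq_zero]
    exact hn
  rcases eq_or_lt_of_le ha0 with haz | hapos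
  · -- vol A = 0
    obtain ⟨p, hp⟩ := hAne
    have hsub : {(1 - t) • p} + t • B ⊆ (1 - t) • A + t • B := by
      apply Set.add_subset_add_right
      rw [Set.singleton_subset_iff]
      exact Set.smul_mem_smul_set hp
    have hle : ENNReal.ofReal (t ^ n) * volume B ≤ volume ((1 - t) • A + t • B) := by
      rw [← vol_combo_point ((1-t) • p) B ht0.le]
      exact measure_mono hsub
    calc ((1 - t) * a ^ (n:ℝ)⁻¹ + t * b ^ (n:ℝ)⁻¹) ^ n
        = (t * b ^ (n:ℝ)⁻¹) ^ n := by
          rw [← haz, Real.zero_rpow hinvn, mul_zero, zero_add]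
      _ = t ^ n * b := by
          rw [mul_pow, Real.rpow_inv_natCast_pow hb0 hn]
      _ = (ENNReal.ofReal (t ^ n) * volume B).toReal := by
          rw [ENNReal.toReal_mul, ENNReal.toReal_ofReal (pow_nonneg ht0.le n), hbdef]
      _ ≤ (volume ((1 - t) • A + t • B)).toReal := ENNReal.toReal_mono hMtop hle
  rcases eq_or_lt_of_le hb0 with hbz | hbpos
  · -- vol B = 0
    obtain ⟨p, hp⟩ := hBne
    have hsub : {t • p} + (1 - t) • A ⊆ (1 - t) • A + t • B := by
      rw [add_comm ((1-t) • A)]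
      apply Set.add_subset_add_right
      rw [Set.singleton_subset_iff]
      exact Set.smul_mem_smul_set hp
    have hle : ENNReal.ofReal ((1 - t) ^ n) * volume A ≤ volume ((1 - t) • A + t • B) := by
      rw [← vol_combo_point (t • p) A h1t.le]
      exact measure_mono hsub
    calc ((1 - t) * a ^ (n:ℝ)⁻¹ + t * b ^ (n:ℝ)⁻¹) ^ n
        = ((1 - t) * a ^ (n:ℝ)⁻¹) ^ n := by
          rw [← hbz, Real.zero_rpow hinvn, mul_zero, add_zero]
      _ = (1 - t) ^ n * a := by
          rw [mul_pow, Real.rpow_inv_natCast_pow ha0 hn]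
      _ = (ENNReal.ofReal ((1 - t) ^ n) * volume A).toReal := by
          rw [ENNReal.toReal_mul, ENNReal.toReal_ofReal (pow_nonneg h1t.le n), hadef]
      _ ≤ (volume ((1 - t) • A + t • B)).toReal := ENNReal.toReal_mono hMtop hle
  · -- main case
    set α : ℝ := a ^ (n:ℝ)⁻¹ with hαdef
    set β : ℝ := b ^ (n:ℝ)⁻¹ with hβdef
    have hαpos : 0 < α := Real.rpow_pos_of_pos hapos _
    have hβpos : 0 < β := Real.rpow_pos_of_pos hbpos _
    have hαn : α ^ n = a := Real.rpow_inv_natCast_pow hapos.le hn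
    have hβn : β ^ n = b := Real.rpow_inv_natCast_pow hbpos.le hn
    set c : ℝ := (1 - t) * α + t * β with hcdef
    have hcpos : 0 < c := by positivity
    set s : ℝ := t * β / c with hsdef
    have hs0 : 0 < s := by positivity
    have hs1 : s < 1 := by
      rw [hsdef, div_lt_one hcpos, hcdef]
      nlinarith
    have h1s : 1 - s = (1 - t) * α / c := by
      rw [hsdef, hcdef]
      field_simp
      ring
    set A' : Set E := α⁻¹ • A with hA'def
    set B' : Set E := β⁻¹ • B with hB'def
    have hvolA' : volume A' = 1 := by
      rw [hA'def, vol_smul_set, abs_of_nonneg (pow_nonneg (inv_pos.mpr hαpos).le n),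
        ← ENNReal.ofReal_toReal hAc.measure_lt_top.ne, ← hadef,
        ← ENNReal.ofReal_mul (pow_nonneg (inv_pos.mpr hαpos).le n)]
      rw [inv_pow, ← hαn]
      rw [inv_mul_cancel₀ (by positivity : α ^ n ≠ 0)]
      exact ENNReal.ofReal_one
    have hvolB' : volume B' = 1 := by
      rw [hB'def, vol_smul_set, abs_of_nonneg (pow_nonneg (inv_pos.mpr hβpos).le n),
        ← ENNReal.ofReal_toReal hBc.measure_lt_top.ne, ← hbdef,
        ← ENNReal.ofReal_mul (pow_nonneg (inv_pos.mpr hβpos).le n)]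
      rw [inv_pow, ← hβn]
      rw [inv_mul_cancel₀ (by positivity : β ^ n ≠ 0)]
      exact ENNReal.ofReal_one
    have hset : (1 - t) • A + t • B = c • ((1 - s) • A' + s • B') := by
      rw [smul_set_distrib, hA'def, hB'def, smul_smul, smul_smul, smul_smul, smul_smul]
      have e1 : c * (1 - s) * α⁻¹ = 1 - t := by
        rw [h1s]
        field_simp
      have e2 : c * s * β⁻¹ = t := by
        rw [hsdef]
        field_simp
      rw [e1, e2]
    have hD : 1 ≤ volume ((1 - s) • A' + s • B') := by
      have := bm_euclidean n s hs0 hs1 A' B' (hAne.smul_set) (hBne.smul_set)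
        (hAc.smul _) (hBc.smul _) (hAv.smul _) (hBv.smul _)
      rwa [hvolA', hvolB', ENNReal.one_rpow, ENNReal.one_rpow, one_mul] at this
    have hvolM : ENNReal.ofReal (c ^ n) ≤ volume ((1 - t) • A + t • B) := by
      rw [hset, vol_smul_set, abs_of_nonneg (pow_nonneg hcpos.le n)]
      calc ENNReal.ofReal (c ^ n) = ENNReal.ofReal (c ^ n) * 1 := (mul_one _).symm
        _ ≤ ENNReal.ofReal (c ^ n) * volume ((1 - s) • A' + s • B') :=
            mul_le_mul_right hD _
    calc ((1 - t) * a ^ (n:ℝ)⁻¹ + t * b ^ (n:ℝ)⁻¹) ^ n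
        = c ^ n := by rw [hcdef]
      _ = (ENNReal.ofReal (c ^ n)).toReal := (ENNReal.toReal_ofReal (pow_nonneg hcpos.le n)).symm
      _ ≤ (volume ((1 - t) • A + t • B)).toReal := ENNReal.toReal_mono hMtop hvolM

end Additive

section Geometry

variable {n : ℕ}

local notation "E" => EuclideanSpace ℝ (Fin n)

lemma interior_neg' (S : Set E) : interior (-S) = -interior S := by
  have h := (Homeomorph.neg E).image_interior S
  simpa [Set.image_neg] using h.symm

lemma neg_vadd_set (x : E) (S : Set E) : -(x +ᵥ S) = (-x) +ᵥ (-S) := by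
  ext y
  rw [Set.mem_neg, Set.mem_vadd_set, Set.mem_vadd_set]
  constructor
  · rintro ⟨s, hs, hsum⟩
    refine ⟨-s, Set.neg_mem_neg.mpr hs, ?_⟩
    simp only [vadd_eq_add] at hsum ⊢
    have : -(x + s) = y := by rw [hsum, neg_neg]
    rw [← this]; abel
  · rintro ⟨u, hu, hsum⟩
    rw [Set.mem_neg] at hu
    refine ⟨-u, hu, ?_⟩
    simp only [vadd_eq_add] at hsum ⊢
    rw [← hsum]; abel

/-- Gauge-based dichotomy: two convex bodies whose interiors contain `0` and whose
boundaries do not meet satisfy a containment. -/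
lemma dichotomy (hn : 1 < n) {P Q : Set E}
    (hPc : IsCompact P) (hPv : Convex ℝ P) (hQc : IsCompact Q) (hQv : Convex ℝ Q)
    (hP0 : (0:E) ∈ interior P) (hQ0 : (0:E) ∈ interior Q)
    (hdisj : frontier P ∩ frontier Q = ∅) : P ⊆ interior Q ∨ Q ⊆ interior P := by
  have hPnh : P ∈ nhds (0:E) := mem_interior_iff_mem_nhds.mp hP0
  have hQnh : Q ∈ nhds (0:E) := mem_interior_iff_mem_nhds.mp hQ0
  have hgP : Continuous (gauge P) := continuous_gauge hPv hPnh
  have hgQ : Continuous (gauge Q) := continuous_gauge hQv hQnh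
  have hPpos : ∀ x : E, x ≠ 0 → 0 < gauge P x := fun x hx =>
    (gauge_pos (absorbent_nhds_zero hPnh) ((NormedSpace.isVonNBounded_iff ℝ).mpr
      hPc.isBounded)).mpr hx
  have hQpos : ∀ x : E, x ≠ 0 → 0 < gauge Q x := fun x hx =>
    (gauge_pos (absorbent_nhds_zero hQnh) ((NormedSpace.isVonNBounded_iff ℝ).mpr
      hQc.isBounded)).mpr hx
  have hne : ∀ u ∈ Metric.sphere (0:E) 1, gauge Q u - gauge P u ≠ 0 := by
    intro u hu heq
    have hu0 : u ≠ 0 := by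
      intro h
      rw [h] at hu
      simp at hu
    have heq' : gauge Q u = gauge P u := by linarith [sub_eq_zero.mp heq]
    set γ : ℝ := gauge P u with hγdef
    have hγpos : 0 < γ := hPpos u hu0
    have hxP : gauge P (γ⁻¹ • u) = 1 := by
      rw [gauge_smul_of_nonneg (inv_nonneg.mpr hγpos.le), smul_eq_mul,
        inv_mul_cancel₀ hγpos.ne']
    have hxQ : gauge Q (γ⁻¹ • u) = 1 := by
      rw [gauge_smul_of_nonneg (inv_nonneg.mpr hγpos.le), smul_eq_mul, heq',
        inv_mul_cancel₀ hγpos.ne']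
    have hfP := (gauge_eq_one_iff_mem_frontier hPv hPnh).mp hxP
    have hfQ := (gauge_eq_one_iff_mem_frontier hQv hQnh).mp hxQ
    rw [Set.eq_empty_iff_forall_notMem] at hdisj
    exact hdisj _ ⟨hfP, hfQ⟩
  have hrank : 1 < Module.rank ℝ (EuclideanSpace ℝ (Fin n)) := by
    rw [← Module.finrank_eq_rank, finrank_euclideanSpace_fin]
    exact_mod_cast hn
  have hconn : IsConnected (Metric.sphere (0:E) 1) := isConnected_sphere hrank 0 zero_le_one
  have himg : IsPreconnected ((fun u => gauge Q u - gauge P u) '' Metric.sphere (0:E) 1) :=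
    hconn.isPreconnected.image _ ((hgQ.sub hgP).continuousOn)
  have hsign : (∀ u ∈ Metric.sphere (0:E) 1, gauge Q u < gauge P u)
      ∨ (∀ u ∈ Metric.sphere (0:E) 1, gauge P u < gauge Q u) := by
    by_contra hcon
    push_neg at hcon
    obtain ⟨⟨u, hu, huge⟩, ⟨v, hv, hvle⟩⟩ := hcon
    have hupos : 0 < gauge Q u - gauge P u :=
      lt_of_le_of_ne (by linarith) (Ne.symm (hne u hu))
    have hvneg : gauge Q v - gauge P v < 0 :=
      lt_of_le_of_ne (by linarith) (hne v hv)
    have h0m : (0:ℝ) ∈ (fun u => gauge Q u - gauge P u) '' Metric.sphere (0:E) 1 :=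
      himg.ordConnected.out (Set.mem_image_of_mem _ hv) (Set.mem_image_of_mem _ hu)
        ⟨hvneg.le, hupos.le⟩
    obtain ⟨w, hw, hw0⟩ := h0m
    exact hne w hw hw0
  rcases hsign with hlt | hlt
  · left
    intro x hx
    rcases eq_or_ne x 0 with rfl | hx0
    · exact hQ0
    · have hxs : ‖x‖⁻¹ • x ∈ Metric.sphere (0:E) 1 := by
        simp [norm_smul, norm_ne_zero_iff.mpr hx0, inv_mul_cancel₀ (norm_ne_zero_iff.mpr hx0)]
      have hkey := hlt _ hxs
      have hxrw : x = ‖x‖ • (‖x‖⁻¹ • x) := (smul_inv_smul₀ (norm_ne_zero_iff.mpr hx0) x).symm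
      have hgQx : gauge Q x < gauge P x := by
        rw [hxrw, gauge_smul_of_nonneg (norm_nonneg x), gauge_smul_of_nonneg (norm_nonneg x),
          smul_eq_mul, smul_eq_mul]
        exact mul_lt_mul_of_pos_left hkey (norm_pos_iff.mpr hx0)
      have : gauge Q x < 1 := lt_of_lt_of_le hgQx (gauge_le_one_of_mem hx)
      exact (gauge_lt_one_iff_mem_interior hQv hQnh).mp this
  · right
    intro x hx
    rcases eq_or_ne x 0 with rfl | hx0
    · exact hP0
    · have hxs : ‖x‖⁻¹ • x ∈ Metric.sphere (0:E) 1 := by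
        simp [norm_smul, norm_ne_zero_iff.mpr hx0, inv_mul_cancel₀ (norm_ne_zero_iff.mpr hx0)]
      have hkey := hlt _ hxs
      have hxrw : x = ‖x‖ • (‖x‖⁻¹ • x) := (smul_inv_smul₀ (norm_ne_zero_iff.mpr hx0) x).symm
      have hgPx : gauge P x < gauge Q x := by
        rw [hxrw, gauge_smul_of_nonneg (norm_nonneg x), gauge_smul_of_nonneg (norm_nonneg x),
          smul_eq_mul, smul_eq_mul]
        exact mul_lt_mul_of_pos_left hkey (norm_pos_iff.mpr hx0)
      have : gauge P x < 1 := lt_of_lt_of_le hgPx (gauge_le_one_of_mem hx)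
      exact (gauge_lt_one_iff_mem_interior hPv hPnh).mp this

lemma frontier_vadd' (x : E) (S : Set E) : frontier (x +ᵥ S) = x +ᵥ frontier S := by
  have h := (Homeomorph.addLeft x).image_frontier S
  have himg : (⇑(Homeomorph.addLeft x)) '' S = x +ᵥ S := by
    rw [← Set.image_vadd]
    rfl
  have himg2 : (⇑(Homeomorph.addLeft x)) '' frontier S = x +ᵥ frontier S := by
    rw [← Set.image_vadd]
    rfl
  rw [himg, himg2] at h
  exact h.symm

/-- translated dichotomy -/
lemma dichotomy_at (hn : 1 < n) {P Q : Set E}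
    (hPc : IsCompact P) (hPv : Convex ℝ P) (hQc : IsCompact Q) (hQv : Convex ℝ Q)
    {z : E} (hzP : z ∈ interior P) (hzQ : z ∈ interior Q)
    (hdisj : frontier P ∩ frontier Q = ∅) : P ⊆ interior Q ∨ Q ⊆ interior P := by
  have hvadd : ∀ S : Set E, (-z) +ᵥ S = (fun y => -z + y) '' S := by
    intro S; rw [← Set.image_vadd]; rfl
  have hPc' : IsCompact ((-z) +ᵥ P) := by rw [hvadd]; exact hPc.image (continuous_add_left _)
  have hQc' : IsCompact ((-z) +ᵥ Q) := by rw [hvadd]; exact hQc.image (continuous_add_left _)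
  have h0P : (0:E) ∈ interior ((-z) +ᵥ P) := by
    rw [interior_vadd]
    exact ⟨z, hzP, by simp⟩
  have h0Q : (0:E) ∈ interior ((-z) +ᵥ Q) := by
    rw [interior_vadd]
    exact ⟨z, hzQ, by simp⟩
  have hdisj' : frontier ((-z) +ᵥ P) ∩ frontier ((-z) +ᵥ Q) = ∅ := by
    rw [frontier_vadd', frontier_vadd', Set.eq_empty_iff_forall_notMem]
    rintro y ⟨⟨p, hp, rfl⟩, ⟨q, hq, hpq⟩⟩
    have : p = q := by
      have := hpq
      simp only [vadd_eq_add, add_right_inj] at this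
      exact this.symm
    rw [Set.eq_empty_iff_forall_notMem] at hdisj
    exact hdisj p ⟨hp, this ▸ hq⟩
  rcases dichotomy hn hPc' (hPv.vadd _) hQc' (hQv.vadd _) h0P h0Q hdisj' with hc | hc
  · left
    intro x hx
    have hx' : (-z) +ᵥ x ∈ (-z) +ᵥ P := ⟨x, hx, rfl⟩
    have hmem := hc hx'
    rw [interior_vadd] at hmem
    obtain ⟨y, hy, hxy⟩ := hmem
    simp only [vadd_eq_add, add_right_inj] at hxy
    rwa [← hxy]
  · right
    intro x hx
    have hx' : (-z) +ᵥ x ∈ (-z) +ᵥ Q := ⟨x, hx, rfl⟩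
    have hmem := hc hx'
    rw [interior_vadd] at hmem
    obtain ⟨y, hy, hxy⟩ := hmem
    simp only [vadd_eq_add, add_right_inj] at hxy
    rwa [← hxy]

lemma vadd_compact {L : Set E} (hLc : IsCompact L) (x : E) : IsCompact (x +ᵥ L) := by
  rw [show x +ᵥ L = (fun y => x + y) '' L from by rw [← Set.image_vadd]; rfl]
  exact hLc.image (continuous_add_left x)

lemma exists_interior_near {P : Set E} (hPv : Convex ℝ P) {w m : E} (hw : w ∈ interior P)
    (hm : m ∈ P) {U : Set E} (hU : IsOpen U) (hmU : m ∈ U) :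
    ∃ z, z ∈ interior P ∩ U := by
  obtain ⟨δ, hδpos, hball⟩ := Metric.isOpen_iff.mp hU m hmU
  set ε : ℝ := min (1/2) (δ / (2 * (‖w - m‖ + 1))) with hεdef
  have hnorm : (0:ℝ) < ‖w - m‖ + 1 := by positivity
  have hεpos : 0 < ε := lt_min (by norm_num) (by positivity)
  have hεle : ε ≤ δ / (2 * (‖w - m‖ + 1)) := min_le_right _ _
  set z : E := ε • w + (1 - ε) • m with hzdef
  have hεhalf : ε ≤ 1/2 := min_le_left _ _
  have hzint : z ∈ interior P :=
    hPv.combo_interior_self_mem_interior hw hm hεpos (by linarith) (by ring)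
  have hzm : z - m = ε • (w - m) := by
    rw [hzdef]
    module
  have hznorm : ‖z - m‖ < δ := by
    rw [hzm, norm_smul, Real.norm_eq_abs, abs_of_pos hεpos]
    calc ε * ‖w - m‖ ≤ δ / (2 * (‖w - m‖ + 1)) * ‖w - m‖ := by
          apply mul_le_mul_of_nonneg_right hεle (norm_nonneg _)
      _ < δ := by
          rw [div_mul_eq_mul_div, div_lt_iff₀ (by positivity)]
          nlinarith [norm_nonneg (w - m)]
  exact ⟨z, hzint, hball (by rwa [Metric.mem_ball, dist_eq_norm])⟩

lemma zero_mem_interior_symm {K : Set E} (hKv : Convex ℝ K) (hKsymm : K = -K)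
    (hKint : (interior K).Nonempty) : (0:E) ∈ interior K := by
  obtain ⟨w, hw⟩ := hKint
  have hw' : -w ∈ interior K := by
    have : -w ∈ -interior K := Set.neg_mem_neg.mpr hw
    rwa [← interior_neg', ← hKsymm] at this
  have h := hKv.interior hw hw' (by norm_num : (0:ℝ) ≤ 1/2) (by norm_num : (0:ℝ) ≤ 1/2)
    (by norm_num)
  have hz : (1/2 : ℝ) • w + (1/2 : ℝ) • (-w) = (0:E) := by module
  rwa [hz] at h

lemma not_vadd_subset_interior {K L : Set E} (hKv : Convex ℝ K) (hKsymm : K = -K)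
    (hLcl : IsClosed L) (hLsymm : L = -L)
    (hF : (frontier K ∩ frontier L).Nonempty) (x : E) :
    ¬ (x +ᵥ L ⊆ interior K) := by
  intro hsub
  have hsub2 : (-x) +ᵥ L ⊆ interior K := by
    rintro _ ⟨l, hl, rfl⟩
    show (-x) +ᵥ l ∈ interior K
    have hnl : -l ∈ L := by rw [hLsymm]; exact Set.neg_mem_neg.mpr hl
    have hK : x + (-l) ∈ interior K := hsub ⟨-l, hnl, rfl⟩
    have h2 : -(x + -l) ∈ -interior K := Set.neg_mem_neg.mpr hK
    rw [← interior_neg', ← hKsymm] at h2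
    have heq : (-x) +ᵥ l = -(x + -l) := by simp only [vadd_eq_add]; abel
    rwa [heq]
  have hLsub : L ⊆ interior K := by
    intro l hl
    have h1 : x + l ∈ interior K := hsub ⟨l, hl, rfl⟩
    have h2 : -x + l ∈ interior K := hsub2 ⟨l, hl, rfl⟩
    have h := hKv.interior h1 h2 (by norm_num : (0:ℝ) ≤ 1/2) (by norm_num : (0:ℝ) ≤ 1/2)
      (by norm_num)
    have hz : (1/2 : ℝ) • (x + l) + (1/2 : ℝ) • (-x + l) = l := by module
    rwa [hz] at h
  obtain ⟨w, hwK, hwL⟩ := hF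
  have hwint : w ∈ interior K := hLsub (hLcl.frontier_subset hwL)
  exact (disjoint_interior_frontier (s := K)).ne_of_mem hwint hwK rfl

lemma not_subset_interior_vadd {K L : Set E} (hKcl : IsClosed K) (hKsymm : K = -K)
    (hLv : Convex ℝ L) (hLsymm : L = -L)
    (hF : (frontier K ∩ frontier L).Nonempty) (x : E) :
    ¬ (K ⊆ interior (x +ᵥ L)) := by
  intro hsub
  have hsub2 : K ⊆ interior ((-x) +ᵥ L) := by
    intro k hk
    have hnk : -k ∈ K := by rw [hKsymm]; exact Set.neg_mem_neg.mpr hk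
    have h1 : -k ∈ interior (x +ᵥ L) := hsub hnk
    have h2 : -(-k) ∈ -interior (x +ᵥ L) := Set.neg_mem_neg.mpr h1
    rw [← interior_neg', neg_vadd_set, ← hLsymm, neg_neg] at h2
    exact h2
  have hKsub : K ⊆ interior L := by
    intro k hk
    have h1 := hsub hk
    have h2 := hsub2 hk
    rw [interior_vadd] at h1 h2
    obtain ⟨a, ha, hka⟩ := h1
    obtain ⟨b, hb, hkb⟩ := h2
    simp only [vadd_eq_add] at hka hkb
    have h := hLv.interior ha hb (by norm_num : (0:ℝ) ≤ 1/2) (by norm_num : (0:ℝ) ≤ 1/2)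
      (by norm_num)
    have hz : (1/2 : ℝ) • a + (1/2 : ℝ) • b = k := by
      have h1' : a = -x + k := by rw [← hka]; abel
      have h2' : b = x + k := by rw [← hkb]; abel
      rw [h1', h2']; module
    rwa [hz] at h
  obtain ⟨w, hwK, hwL⟩ := hF
  have hwint : w ∈ interior L := hKsub (hKcl.frontier_subset hwK)
  exact (disjoint_interior_frontier (s := L)).ne_of_mem hwint hwL rfl

lemma frontier_meet (hn : 1 < n) {K L : Set E} (hKc : IsCompact K) (hKv : Convex ℝ K)
    (hLc : IsCompact L) (hLv : Convex ℝ L) (hKsymm : K = -K) (hLsymm : L = -L)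
    (hF : (frontier K ∩ frontier L).Nonempty) (x : E)
    {z : E} (hzK : z ∈ interior K) (hzL : z ∈ interior (x +ᵥ L)) :
    (frontier K ∩ frontier (x +ᵥ L)).Nonempty := by
  by_contra hcon
  rw [Set.not_nonempty_iff_eq_empty] at hcon
  rcases dichotomy_at hn hKc hKv (vadd_compact hLc x) (hLv.vadd x) hzK hzL hcon with hc | hc
  · exact not_subset_interior_vadd hKc.isClosed hKsymm hLv hLsymm hF x hc
  · exact not_vadd_subset_interior hKv hKsymm hLc.isClosed hLsymm hF x hc

end Geometry

section Main

variable {n : ℕ}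

local notation "E" => EuclideanSpace ℝ (Fin n)

lemma backward_dir (hn : 1 < n) {K L : Set E}
    (hKcomp : IsCompact K) (hKconv : Convex ℝ K) (hKint : (interior K).Nonempty)
    (hKstrict : StrictConvex ℝ K) (hKsymm : K = -K)
    (hLcomp : IsCompact L) (hLconv : Convex ℝ L) (hLint : (interior L).Nonempty)
    (hLstrict : StrictConvex ℝ L) (hLsymm : L = -L)
    (hF : (frontier K ∩ frontier L).Nonempty)
    {x₀ x₁ : E} (hx₀ : x₀ ∈ K + -L) (hx₁ : x₁ ∈ K + -L) (hne : x₀ ≠ x₁)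
    {t : ℝ} (ht0 : 0 < t) (ht1 : t < 1) :
    (1 - t) * (volume (K ∩ (x₀ +ᵥ L))).toReal ^ ((n:ℝ))⁻¹
      + t * (volume (K ∩ (x₁ +ᵥ L))).toReal ^ ((n:ℝ))⁻¹
      < (volume (K ∩ (((1 - t) • x₀ + t • x₁) +ᵥ L))).toReal ^ ((n:ℝ))⁻¹ := by
  have h1t : (0:ℝ) < 1 - t := by linarith
  set x : E := (1 - t) • x₀ + t • x₁ with hxdef
  set A : Set E := K ∩ (x₀ +ᵥ L) with hAdef
  set B : Set E := K ∩ (x₁ +ᵥ L) with hBdef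
  set C : Set E := K ∩ (x +ᵥ L) with hCdef
  set M : Set E := (1 - t) • A + t • B with hMdef
  -- nonemptiness of A and B
  have hmemne : ∀ y : E, y ∈ K + -L → (K ∩ (y +ᵥ L)).Nonempty := by
    intro y hy
    obtain ⟨k, hk, w, hw, hkw⟩ := Set.mem_add.mp hy
    refine ⟨k, hk, ⟨-w, ?_, ?_⟩⟩
    · rw [← Set.neg_mem_neg, neg_neg] at hw; exact hw
    · simp only [vadd_eq_add]; rw [← hkw]; abel
  have hAne : A.Nonempty := hmemne x₀ hx₀
  have hBne : B.Nonempty := hmemne x₁ hx₁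
  have hAc : IsCompact A := hKcomp.inter_right (vadd_compact hLcomp x₀).isClosed
  have hBc : IsCompact B := hKcomp.inter_right (vadd_compact hLcomp x₁).isClosed
  have hCc : IsCompact C := hKcomp.inter_right (vadd_compact hLcomp x).isClosed
  have hAv : Convex ℝ A := hKconv.inter (hLconv.vadd x₀)
  have hBv : Convex ℝ B := hKconv.inter (hLconv.vadd x₁)
  have hCv : Convex ℝ C := hKconv.inter (hLconv.vadd x)
  have hMc : IsCompact M := (hAc.smul (1 - t)).add (hBc.smul t)
  -- M ⊆ C
  have hMsubC : M ⊆ C := by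
    intro z hz
    obtain ⟨a, ha, b, hb, rfl⟩ := mem_combo.mp hz
    obtain ⟨la, hla, haeq⟩ := ha.2
    obtain ⟨lb, hlb, hbeq⟩ := hb.2
    simp only [vadd_eq_add] at haeq hbeq
    constructor
    · exact hKconv ha.1 hb.1 h1t.le ht0.le (by ring)
    · refine ⟨(1 - t) • la + t • lb, hLconv hla hlb h1t.le ht0.le (by ring), ?_⟩
      simp only [vadd_eq_add]
      rw [← haeq, ← hbeq, hxdef]
      module
  -- a common interior point z of K and x +ᵥ L
  obtain ⟨a₀, ha₀⟩ := id hAne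
  obtain ⟨b₀, hb₀⟩ := id hBne
  have hm₀ : (1 - t) • a₀ + t • b₀ ∈ C := hMsubC (mem_combo.mpr ⟨a₀, ha₀, b₀, hb₀, rfl⟩)
  have hwL : ((x +ᵥ interior L : Set E)).Nonempty := by
    obtain ⟨w, hw⟩ := hLint
    exact ⟨x +ᵥ w, ⟨w, hw, rfl⟩⟩
  have hintxL : interior (x +ᵥ L) = x +ᵥ interior L := interior_vadd x L
  have hz : ∃ z, z ∈ interior K ∩ interior (x +ᵥ L) := by
    rcases eq_or_ne a₀ b₀ with rfl | hab
    · -- a₀ = b₀ : use strict convexity of L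
      obtain ⟨l₀, hl₀, he₀⟩ := ha₀.2
      obtain ⟨l₁, hl₁, he₁⟩ := hb₀.2
      simp only [vadd_eq_add] at he₀ he₁
      have hll : l₀ ≠ l₁ := by
        intro hq
        apply hne
        rw [hq] at he₀
        have := he₀.trans he₁.symm
        exact add_right_cancel this
      have hstr := hLstrict hl₀ hl₁ hll h1t ht0 (by ring)
      have hmem : a₀ ∈ interior (x +ᵥ L) := by
        rw [hintxL]
        refine ⟨(1 - t) • l₀ + t • l₁, hstr, ?_⟩
        simp only [vadd_eq_add]
        rw [hxdef]
        linear_combination (norm := module) (1 - t) • he₀ + t • he₁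
      obtain ⟨w, hw⟩ := hKint
      obtain ⟨z, hz1, hz2⟩ := exists_interior_near hKconv hw ha₀.1
        (isOpen_interior (s := (x +ᵥ L : Set E))) hmem
      exact ⟨z, hz1, hz2⟩
    · -- a₀ ≠ b₀ : use strict convexity of K
      have hstr := hKstrict ha₀.1 hb₀.1 hab h1t ht0 (by ring)
      obtain ⟨w, hw⟩ := hwL
      rw [← hintxL] at hw
      obtain ⟨z, hz1, hz2⟩ := exists_interior_near (hLconv.vadd x) hw hm₀.2
        (isOpen_interior (s := K)) hstr
      exact ⟨z, hz2, hz1⟩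
  obtain ⟨z, hzK, hzL⟩ := hz
  have hzC : z ∈ interior C := by
    rw [hCdef, interior_inter]
    exact ⟨hzK, hzL⟩
  have hCpos : 0 < volume C := Measure.measure_pos_of_nonempty_interior _ ⟨z, hzC⟩
  -- the frontier point p
  obtain ⟨p, hpK, hpxL⟩ := frontier_meet hn hKcomp hKconv hLcomp hLconv hKsymm hLsymm hF x hzK hzL
  have hpC : p ∈ C := ⟨hKcomp.isClosed.frontier_subset hpK,
    (vadd_compact hLcomp x).isClosed.frontier_subset hpxL⟩
  have hpM : p ∉ M := by
    intro hpM
    obtain ⟨a, ha, b, hb, heq⟩ := mem_combo.mp hpM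
    rcases eq_or_ne a b with rfl | hab
    · have hpa : p = a := by rw [← heq]; module
      obtain ⟨l₀, hl₀, he₀⟩ := ha.2
      obtain ⟨l₁, hl₁, he₁⟩ := hb.2
      simp only [vadd_eq_add] at he₀ he₁
      have hll : l₀ ≠ l₁ := by
        intro hq
        apply hne
        rw [hq] at he₀
        exact add_right_cancel (he₀.trans he₁.symm)
      have hstr := hLstrict hl₀ hl₁ hll h1t ht0 (by ring)
      have hmem : p ∈ interior (x +ᵥ L) := by
        rw [hintxL]
        refine ⟨(1 - t) • l₀ + t • l₁, hstr, ?_⟩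
        simp only [vadd_eq_add]
        rw [hpa, hxdef]
        linear_combination (norm := module) (1 - t) • he₀ + t • he₁
      exact (disjoint_interior_frontier (s := (x +ᵥ L : Set E))).ne_of_mem hmem hpxL rfl
    · have hstr := hKstrict ha.1 hb.1 hab h1t ht0 (by ring)
      rw [heq] at hstr
      exact (disjoint_interior_frontier (s := K)).ne_of_mem hstr hpK rfl
  -- volume gap
  have hMne : M.Nonempty := ((hAne.smul_set).add (hBne.smul_set))
  have hδpos : 0 < Metric.infDist p M :=
    (hMc.isClosed.notMem_iff_infDist_pos hMne).mp hpM
  set δ : ℝ := Metric.infDist p M with hδdef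
  have hdisj : Disjoint M (C ∩ Metric.ball p δ) := by
    rw [Set.disjoint_left]
    intro q hqM hq2
    have h1 : dist p q ≥ δ := Metric.infDist_le_dist_of_mem hqM
    have h2 : dist q p < δ := Metric.mem_ball.mp hq2.2
    rw [dist_comm] at h2
    linarith
  have hposball : 0 < volume (C ∩ Metric.ball p δ) := by
    obtain ⟨z', hz'1, hz'2⟩ := exists_interior_near hCv hzC hpC Metric.isOpen_ball
      (Metric.mem_ball_self hδpos)
    apply Measure.measure_pos_of_nonempty_interior
    rw [interior_inter, Metric.isOpen_ball.interior_eq]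
    exact ⟨z', hz'1, hz'2⟩
  have hMC : volume M < volume C := by
    have hun : volume (M ∪ (C ∩ Metric.ball p δ)) = volume M + volume (C ∩ Metric.ball p δ) :=
      measure_union hdisj (hCc.measurableSet.inter measurableSet_ball)
    have hsub : M ∪ (C ∩ Metric.ball p δ) ⊆ C := by
      intro q hq
      rcases hq with hq | hq
      · exact hMsubC hq
      · exact hq.1
    calc volume M < volume M + volume (C ∩ Metric.ball p δ) :=
          ENNReal.lt_add_right hMc.measure_lt_top.ne hposball.ne'
      _ = volume (M ∪ (C ∩ Metric.ball p δ)) := hun.symm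
      _ ≤ volume C := measure_mono hsub
  -- Brunn-Minkowski and conclusion
  have hn0 : n ≠ 0 := by omega
  have hBM := bm_additive hn0 hAne hBne hAc hBc hAv hBv ht0 ht1
  set cc : ℝ := (1 - t) * (volume A).toReal ^ ((n:ℝ))⁻¹
    + t * (volume B).toReal ^ ((n:ℝ))⁻¹ with hccdef
  have hcc0 : 0 ≤ cc := by
    apply add_nonneg <;> apply mul_nonneg
    · linarith
    · exact Real.rpow_nonneg ENNReal.toReal_nonneg _
    · linarith
    · exact Real.rpow_nonneg ENNReal.toReal_nonneg _
  have hlt : cc ^ n < (volume C).toReal := by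
    calc cc ^ n ≤ (volume M).toReal := hBM
      _ < (volume C).toReal :=
          (ENNReal.toReal_lt_toReal hMc.measure_lt_top.ne hCc.measure_lt_top.ne).mpr hMC
  calc cc = (cc ^ n) ^ ((n:ℝ))⁻¹ := (Real.pow_rpow_inv_natCast hcc0 hn0).symm
    _ < (volume C).toReal ^ ((n:ℝ))⁻¹ :=
        Real.rpow_lt_rpow (pow_nonneg hcc0 n) hlt
          (inv_pos.mpr (by exact_mod_cast Nat.pos_of_ne_zero hn0))

end Main

section Main2

variable {n : ℕ}

local notation "E" => EuclideanSpace ℝ (Fin n)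

lemma forward_dir (hn : 1 < n) {K L : Set E}
    (hKcomp : IsCompact K) (hKconv : Convex ℝ K) (hKint : (interior K).Nonempty)
    (hKsymm : K = -K)
    (hLcomp : IsCompact L) (hLconv : Convex ℝ L) (hLint : (interior L).Nonempty)
    (hLsymm : L = -L)
    (hstrict : ∀ x₀ ∈ K + -L, ∀ x₁ ∈ K + -L, x₀ ≠ x₁ → ∀ t ∈ Ioo (0 : ℝ) 1,
        (1 - t) * (volume (K ∩ (x₀ +ᵥ L))).toReal ^ (1 / (n : ℝ))
          + t * (volume (K ∩ (x₁ +ᵥ L))).toReal ^ (1 / (n : ℝ))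
          < (volume (K ∩ (((1 - t) • x₀ + t • x₁) +ᵥ L))).toReal ^ (1 / (n : ℝ))) :
    (frontier K ∩ frontier L).Nonempty := by
  by_contra hnF
  rw [Set.not_nonempty_iff_eq_empty] at hnF
  have h0K := zero_mem_interior_symm hKconv hKsymm hKint
  have h0L := zero_mem_interior_symm hLconv hLsymm hLint
  have hipos : 0 < n := by omega
  set v : E := EuclideanSpace.single (⟨0, hipos⟩ : Fin n) (1:ℝ) with hvdef
  have hv : v ≠ 0 := by
    intro hc
    have h1 : v ⟨0, hipos⟩ = 0 := by rw [hc]; rfl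
    rw [hvdef, EuclideanSpace.single_apply] at h1
    simp at h1
  have hvn : 0 < ‖v‖ := norm_pos_iff.mpr hv
  have main : ∀ δ : ℝ, 0 < δ → (∀ y : E, ‖y‖ < δ → y ∈ K + -L) →
      (∀ y z : E, ‖y‖ < δ → ‖z‖ < δ →
        volume (K ∩ (y +ᵥ L)) = volume (K ∩ (z +ᵥ L))) → False := by
    intro δ hδ hsupp hconst
    set u : E := (δ / (2*‖v‖)) • v with hudef
    have hun : ‖u‖ = δ/2 := by
      rw [hudef, norm_smul, Real.norm_eq_abs, abs_of_pos (by positivity)]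
      field_simp
    have hu0 : u ≠ 0 := by
      intro hc
      rw [hc, norm_zero] at hun
      linarith
    have hu1 : ‖u‖ < δ := by rw [hun]; linarith
    have hnu1 : ‖-u‖ < δ := by rw [norm_neg]; exact hu1
    have hne2 : u ≠ -u := by
      intro hc
      apply hu0
      have h2 : u + u = 0 := by nth_rewrite 2 [hc]; abel
      have h3 : (2:ℝ) • u = 0 := by rw [two_smul]; exact h2
      simpa using (smul_eq_zero.mp h3).resolve_left (by norm_num)
    have hmid : (1 - 2⁻¹ : ℝ) • u + (2⁻¹:ℝ) • (-u) = (0:E) := by module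
    have key := hstrict u (hsupp u hu1) (-u) (hsupp (-u) hnu1) hne2 (2⁻¹)
      ⟨by norm_num, by norm_num⟩
    rw [hmid] at key
    rw [hconst u 0 hu1 (by rw [norm_zero]; exact hδ),
      hconst (-u) 0 hnu1 (by rw [norm_zero]; exact hδ)] at key
    set cR : ℝ := (volume (K ∩ ((0:E) +ᵥ L))).toReal ^ (1 / (n : ℝ)) with hcRdef
    have : (1 - 2⁻¹) * cR + 2⁻¹ * cR = cR := by ring
    linarith
  rcases dichotomy hn hKcomp hKconv hLcomp hLconv h0K h0L hnF with hc | hc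
  · -- K ⊆ interior L
    obtain ⟨δ, hδ, hth⟩ := hKcomp.exists_thickening_subset_open isOpen_interior hc
    have hsubs : ∀ y : E, ‖y‖ < δ → K ∩ (y +ᵥ L) = K := by
      intro y hy
      apply Set.inter_eq_left.mpr
      intro k hk
      refine ⟨-y + k, ?_, by simp only [vadd_eq_add]; abel⟩
      have hmem : -y + k ∈ Metric.thickening δ K := by
        rw [Metric.mem_thickening_iff]
        refine ⟨k, hk, ?_⟩
        rw [dist_eq_norm, show -y + k - k = -y by abel, norm_neg]
        exact hy
      exact interior_subset (hth hmem)
    have hKne : K.Nonempty := hKint.mono interior_subset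
    apply main δ hδ
    · intro y hy
      obtain ⟨k, hk⟩ := hKne
      have hk2 : k ∈ K ∩ (y +ᵥ L) := by rw [hsubs y hy]; exact hk
      obtain ⟨l, hl, hyl⟩ := hk2.2
      simp only [vadd_eq_add] at hyl
      exact Set.mem_add.mpr ⟨k, hk, -l, Set.neg_mem_neg.mpr hl, by rw [← hyl]; abel⟩
    · intro y z hy hz
      rw [hsubs y hy, hsubs z hz]
  · -- L ⊆ interior K
    obtain ⟨δ, hδ, hth⟩ := hLcomp.exists_thickening_subset_open isOpen_interior hc
    have hsubs : ∀ y : E, ‖y‖ < δ → K ∩ (y +ᵥ L) = y +ᵥ L := by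
      intro y hy
      apply Set.inter_eq_right.mpr
      rintro _ ⟨l, hl, rfl⟩
      show y +ᵥ l ∈ K
      have hmem : y + l ∈ Metric.thickening δ L := by
        rw [Metric.mem_thickening_iff]
        refine ⟨l, hl, ?_⟩
        rw [dist_eq_norm, show y + l - l = y by abel]
        exact hy
      exact interior_subset (hth hmem)
    have hLne : L.Nonempty := hLint.mono interior_subset
    apply main δ hδ
    · intro y hy
      obtain ⟨l, hl⟩ := hLne
      have hyl : y + l ∈ K := by
        have hsub := Set.inter_eq_right.mp (hsubs y hy)
        exact hsub ⟨l, hl, rfl⟩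
      exact Set.mem_add.mpr ⟨y + l, hyl, -l, Set.neg_mem_neg.mpr hl, by abel⟩
    · intro y z hy hz
      rw [hsubs y hy, hsubs z hz, measure_vadd, measure_vadd]

end Main2


/-- Corollary 6.1: for origin-symmetric strictly convex bodies `K, L` in `ℝⁿ`, `n > 1`, the
cross covariogram is strictly `1/n`-concave on its support if and only if
`∂K ∩ ∂L ≠ ∅`. -/
theorem strict_concavity_iff_boundaries_meet
    (n : ℕ) (hn : 1 < n)
    (K L : Set (EuclideanSpace ℝ (Fin n)))
    (hKcomp : IsCompact K) (hKconv : Convex ℝ K) (hKint : (interior K).Nonempty)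
    (hKstrict : StrictConvex ℝ K) (hKsymm : K = -K)
    (hLcomp : IsCompact L) (hLconv : Convex ℝ L) (hLint : (interior L).Nonempty)
    (hLstrict : StrictConvex ℝ L) (hLsymm : L = -L)
    (g : EuclideanSpace ℝ (Fin n) → ℝ)
    (hg : ∀ x, g x = (volume (K ∩ (x +ᵥ L))).toReal) :
    (∀ x₀ ∈ K + -L, ∀ x₁ ∈ K + -L, x₀ ≠ x₁ → ∀ t ∈ Ioo (0 : ℝ) 1,
        (1 - t) * g x₀ ^ (1 / (n : ℝ)) + t * g x₁ ^ (1 / (n : ℝ))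
          < g ((1 - t) • x₀ + t • x₁) ^ (1 / (n : ℝ)))
      ↔ (frontier K ∩ frontier L).Nonempty := by
  constructor
  · intro hstrict
    apply forward_dir hn hKcomp hKconv hKint hKsymm hLcomp hLconv hLint hLsymm
    intro x₀ hx₀ x₁ hx₁ hxne t ht
    have hkey := hstrict x₀ hx₀ x₁ hx₁ hxne t ht
    rwa [hg x₀, hg x₁, hg ((1 - t) • x₀ + t • x₁)] at hkey
  · intro hF x₀ hx₀ x₁ hx₁ hxne t ht
    rw [hg x₀, hg x₁, hg ((1 - t) • x₀ + t • x₁)]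
    simp only [one_div]
    exact backward_dir hn hKcomp hKconv hKint hKstrict hKsymm hLcomp hLconv hLint hLstrict
      hLsymm hF hx₀ hx₁ hxne ht.1 ht.2
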